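/- For any integer h ≥ 1, with step size η_t = c·(max{t*, t})^{−α} where α ∈ (0.5,1) and t* is as in the SGD convergence theorem, and for any κ > 0, one has ∑_{τ=1}^{t−1} η_τ^h · ∏_{s=τ+1}^t (1 − η_s/κ) ≤ C̃₁ · η_t^{h−1} for all t, provided the constant c is sufficiently large (in particular c/κ > (h−1)α), where C̃₁ is a constant independent of t. -/

import Mathlib

open Finset

noncomputable def etaSS (c α : ℝ) (tstar : ℕ) (s : ℕ) : ℝ :=
  c * (max (tstar : ℝ) (s : ℝ)) ^ (-α)

noncomputable def FSS (c α κ : ℝ) (tstar h : ℕ) (t : ℕ) : ℝ :=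
  ∑ τ ∈ Finset.Icc 1 (t - 1),
    (etaSS c α tstar τ) ^ h * ∏ s ∈ Finset.Icc (τ + 1) t, (1 - etaSS c α tstar s / κ)

lemma etaSS_pos {c α : ℝ} {tstar : ℕ} (hc : 0 < c) (hts : 1 ≤ tstar) (s : ℕ) :
    0 < etaSS c α tstar s := by
  unfold etaSS
  have h1 : (0:ℝ) < max (tstar : ℝ) (s : ℝ) :=
    lt_of_lt_of_le (by exact_mod_cast hts : (0:ℝ) < (tstar:ℝ)) (le_max_left _ _)
  exact mul_pos hc (Real.rpow_pos_of_pos h1 _)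

lemma FSS_succ (c α κ : ℝ) (tstar h : ℕ) (t : ℕ) (ht : 1 ≤ t) :
    FSS c α κ tstar h (t + 1)
      = (1 - etaSS c α tstar (t + 1) / κ) * (FSS c α κ tstar h t + (etaSS c α tstar t) ^ h) := by
  obtain ⟨n, rfl⟩ : ∃ n, t = n + 1 := ⟨t - 1, (Nat.succ_pred_eq_of_pos ht).symm⟩
  unfold FSS
  have h1 : (n + 1 + 1) - 1 = n + 1 := rfl
  have h2 : (n + 1) - 1 = n := rfl
  rw [h1, h2]
  have hstep : ∀ τ ∈ Finset.Icc 1 (n + 1),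
      (etaSS c α tstar τ) ^ h * ∏ s ∈ Finset.Icc (τ + 1) (n + 1 + 1), (1 - etaSS c α tstar s / κ)
        = ((etaSS c α tstar τ) ^ h * ∏ s ∈ Finset.Icc (τ + 1) (n + 1), (1 - etaSS c α tstar s / κ))
            * (1 - etaSS c α tstar (n + 1 + 1) / κ) := by
    intro τ hτ
    rw [Finset.prod_Icc_succ_top (by simp at hτ; omega)]
    ring
  rw [Finset.sum_congr rfl hstep, ← Finset.sum_mul,
    Finset.sum_Icc_succ_top (by omega : 1 ≤ n + 1)]
  rw [show Finset.Icc (n + 1 + 1) (n + 1) = ∅ from Finset.Icc_eq_empty (by omega)]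
  simp
  ring

lemma one_sub_ratio_rpow_le {x β M : ℝ} (hx : 1 ≤ x) (hM1 : 1 ≤ M)
    (hβM : β ≤ M) : 1 - (x / (x + 1)) ^ β ≤ M / x := by
  have hx0 : (0:ℝ) < x := lt_of_lt_of_le one_pos hx
  have hx1 : (0:ℝ) < x + 1 := by linarith
  have hw0 : 0 < x / (x + 1) := div_pos hx0 hx1
  have hw1 : x / (x + 1) ≤ 1 := by
    rw [div_le_one hx1]; linarith
  have hinv : 1 / (x + 1) ≤ M / x := by
    rw [div_le_div_iff₀ hx1 hx0]
    nlinarith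
  rcases le_total β 1 with hβ1 | hβ1
  · have h1 : (x / (x + 1)) ^ (1:ℝ) ≤ (x / (x + 1)) ^ β :=
      Real.rpow_le_rpow_of_exponent_ge hw0 hw1 hβ1
    rw [Real.rpow_one] at h1
    have h3 : 1 - (x / (x + 1)) ^ β ≤ 1 - x / (x + 1) := by linarith
    have heq : 1 - x / (x + 1) = 1 / (x + 1) := by field_simp; ring
    rw [heq] at h3
    linarith
  · have hs : (-1:ℝ) ≤ -(1 / (x + 1)) := by
      rw [neg_le_neg_iff, div_le_one hx1]; linarith
    have hb := one_add_mul_self_le_rpow_one_add hs hβ1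
    have heq : 1 + -(1 / (x + 1)) = x / (x + 1) := by field_simp; ring
    rw [heq] at hb
    have h3 : 1 - (x / (x + 1)) ^ β ≤ β * (1 / (x + 1)) := by linarith
    have h4 : β * (1 / (x + 1)) ≤ M / x := by
      calc β * (1 / (x + 1)) ≤ M * (1 / (x + 1)) := by
            apply mul_le_mul_of_nonneg_right hβM
            positivity
        _ = M / (x + 1) := by ring
        _ ≤ M / x := by
            apply div_le_div_of_nonneg_left (by linarith) hx0 (by linarith)
    linarith

lemma rpow_pow_diff_le {x α M : ℝ} (hx : 1 ≤ x) (hα0 : 0 ≤ α) (k : ℕ)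
    (hM1 : 1 ≤ M) (hβM : (k : ℝ) * α ≤ M) :
    (x ^ (-α)) ^ k - ((x + 1) ^ (-α)) ^ k ≤ (M / x) * (x ^ (-α)) ^ k := by
  have hx0 : (0:ℝ) < x := lt_of_lt_of_le one_pos hx
  have hx1 : (0:ℝ) < x + 1 := by linarith
  set β : ℝ := α * (k : ℝ) with hβdef
  have key : 1 - (x / (x + 1)) ^ β ≤ M / x :=
    one_sub_ratio_rpow_le hx hM1 (by rw [hβdef]; linarith [hβM])
  have hu : (x ^ (-α)) ^ k = x ^ (-β) := by
    rw [← Real.rpow_natCast (x ^ (-α)) k, ← Real.rpow_mul hx0.le]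
    congr 1
    rw [hβdef]; ring
  have hv : ((x + 1) ^ (-α)) ^ k = (x + 1) ^ (-β) := by
    rw [← Real.rpow_natCast ((x + 1) ^ (-α)) k, ← Real.rpow_mul hx1.le]
    congr 1
    rw [hβdef]; ring
  have hw : (x + 1) ^ (-β) = (x / (x + 1)) ^ β * x ^ (-β) := by
    rw [Real.div_rpow hx0.le hx1.le, Real.rpow_neg hx0.le, Real.rpow_neg hx1.le]
    field_simp
  rw [hu, hv, hw]
  have hxb : 0 < x ^ (-β) := Real.rpow_pos_of_pos hx0 _
  have h5 := mul_le_mul_of_nonneg_right key hxb.le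
  calc x ^ (-β) - (x / (x + 1)) ^ β * x ^ (-β)
      = (1 - (x / (x + 1)) ^ β) * x ^ (-β) := by ring
    _ ≤ (M / x) * x ^ (-β) := h5

lemma step_key {c α κ M C x : ℝ} (k : ℕ)
    (hx : 1 ≤ x) (hα0 : 0 < α) (hα2 : α < 1) (hκ : 0 < κ) (hc : 0 < c)
    (hM1 : 1 ≤ M) (hβM : (k : ℝ) * α ≤ M) (hC : 4 * κ ≤ C)
    (hxB : (4 * M * κ / c) ^ ((1:ℝ) / (1 - α)) ≤ x) :
    C * (c * x ^ (-α)) ^ k + (c * x ^ (-α)) ^ (k + 1)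
      ≤ C * (c * (x + 1) ^ (-α)) ^ k + (c * (x + 1) ^ (-α) / κ) * (C * (c * x ^ (-α)) ^ k) := by
  have hdiff : (x ^ (-α)) ^ k - ((x + 1) ^ (-α)) ^ k ≤ (M / x) * (x ^ (-α)) ^ k :=
    rpow_pow_diff_le hx hα0.le k hM1 hβM
  have hx0 : (0:ℝ) < x := lt_of_lt_of_le one_pos hx
  have hx1 : (0:ℝ) < x + 1 := by linarith
  have hC0 : (0:ℝ) ≤ C := by linarith
  set u : ℝ := x ^ (-α) with hu
  set v : ℝ := (x + 1) ^ (-α) with hv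
  have hu0 : 0 < u := Real.rpow_pos_of_pos hx0 _
  have hv0 : 0 < v := Real.rpow_pos_of_pos hx1 _
  have huv : u ≤ 2 * v := by
    have ha : (0:ℝ) < x ^ α := Real.rpow_pos_of_pos hx0 _
    have hb : (0:ℝ) < (x + 1) ^ α := Real.rpow_pos_of_pos hx1 _
    have h1 : (x + 1) ^ α ≤ 2 * x ^ α := by
      calc (x + 1) ^ α ≤ (2 * x) ^ α :=
            Real.rpow_le_rpow hx1.le (by linarith) hα0.le
        _ = 2 ^ α * x ^ α := Real.mul_rpow (by norm_num) hx0.le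
        _ ≤ 2 * x ^ α := by
            have h2 : (2:ℝ) ^ α ≤ 2 ^ (1:ℝ) :=
              Real.rpow_le_rpow_of_exponent_le one_le_two hα2.le
            rw [Real.rpow_one] at h2
            exact mul_le_mul_of_nonneg_right h2 ha.le
    rw [hu, hv, Real.rpow_neg hx0.le, Real.rpow_neg hx1.le, ← one_div,
      show (2:ℝ) * ((x+1)^α)⁻¹ = 2 / (x+1)^α by ring, div_le_div_iff₀ ha hb]
    linarith
  have hB0 : (0:ℝ) ≤ 4 * M * κ / c := by positivity
  have hxpow : 4 * M * κ / c ≤ x ^ (1 - α) := by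
    have h2 : ((4 * M * κ / c) ^ ((1:ℝ)/(1-α))) ^ (1 - α) ≤ x ^ (1 - α) :=
      Real.rpow_le_rpow (Real.rpow_nonneg hB0 _) hxB (by linarith)
    rw [← Real.rpow_mul hB0,
      one_div_mul_cancel (by intro hz; rw [sub_eq_zero] at hz; exact absurd hz.symm hα2.ne),
      Real.rpow_one] at h2
    exact h2
  have s1 : M / x ≤ c / (4 * κ) * u := by
    have e1 : x ^ (1 - α) * x⁻¹ = u := by
      rw [show x⁻¹ = x ^ (-1:ℝ) by rw [Real.rpow_neg_one], ← Real.rpow_add hx0]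
      congr 1
      ring
    have hMle : M ≤ c / (4 * κ) * x ^ (1 - α) := by
      have h6 := mul_le_mul_of_nonneg_left hxpow (by positivity : (0:ℝ) ≤ c / (4 * κ))
      have heq : c / (4 * κ) * (4 * M * κ / c) = M := by field_simp
      linarith [heq ▸ h6]
    calc M / x = M * x⁻¹ := by ring
      _ ≤ (c / (4 * κ) * x ^ (1 - α)) * x⁻¹ :=
          mul_le_mul_of_nonneg_right hMle (by positivity)
      _ = c / (4 * κ) * u := by rw [mul_assoc, e1]
  have s2 : c * u ≤ C * (c / (4 * κ) * u) := by
    have h7 : c ≤ C * (c / (4 * κ)) := by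
      have h8 : 4 * κ * (c / (4 * κ)) ≤ C * (c / (4 * κ)) :=
        mul_le_mul_of_nonneg_right hC (by positivity)
      have heq : 4 * κ * (c / (4 * κ)) = c := by field_simp
      linarith [heq ▸ h8]
    calc c * u ≤ (C * (c / (4 * κ))) * u := mul_le_mul_of_nonneg_right h7 hu0.le
      _ = C * (c / (4 * κ) * u) := by ring
  have scal : C * (M / x) + c * u ≤ C * (c * v / κ) := by
    have hs3 : C * (c / (2 * κ) * u) ≤ C * (c * v / κ) := by
      apply mul_le_mul_of_nonneg_left _ hC0
      calc c / (2 * κ) * u ≤ c / (2 * κ) * (2 * v) :=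
            mul_le_mul_of_nonneg_left huv (by positivity)
        _ = c * v / κ := by field_simp
    calc C * (M / x) + c * u
        ≤ C * (c / (4 * κ) * u) + C * (c / (4 * κ) * u) :=
          add_le_add (mul_le_mul_of_nonneg_left s1 hC0) s2
      _ = C * (c / (2 * κ) * u) := by ring
      _ ≤ C * (c * v / κ) := hs3
  have E1 := mul_le_mul_of_nonneg_left hdiff (by positivity : (0:ℝ) ≤ C * c ^ k)
  have E2 := mul_le_mul_of_nonneg_right scal (by positivity : (0:ℝ) ≤ c ^ k * u ^ k)
  ring_nf at E1 E2 ⊢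
  linarith [E1, E2]

/-- **Step-size summation lemma (Lemma B.8).**
For any integer `h ≥ 1`, step size `η t = c * (max t* t)^(−α)` with `α ∈ (0.5,1)`,
threshold `t* ≥ 1` and any `κ > 0`, provided the constant `c` is sufficiently large
(in particular `c/κ > (h−1)α`), one has
`∑_{τ=1}^{t−1} η_τ^h ∏_{s=τ+1}^t (1 − η_s/κ) ≤ C̃₁ η_t^{h−1}` for all `t`,
where `C̃₁` does not depend on `t`. -/
theorem stepsize_sum_prod_bound
    (h : ℕ) (hh : 1 ≤ h) (α κ : ℝ) (hα1 : 1/2 < α) (hα2 : α < 1) (hκ : 0 < κ)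
    (tstar : ℕ) (htstar : 1 ≤ tstar) :
    ∃ c₀ : ℝ, 0 < c₀ ∧
      ∀ c : ℝ, c₀ ≤ c → (h - 1 : ℝ) * α < c / κ →
        ∃ Ctil : ℝ, 0 < Ctil ∧
          ∀ t : ℕ,
            ∑ τ ∈ Finset.Icc 1 (t - 1),
                (c * (max (tstar : ℝ) (τ : ℝ)) ^ (-α)) ^ h *
                  ∏ s ∈ Finset.Icc (τ + 1) t,
                    (1 - c * (max (tstar : ℝ) (s : ℝ)) ^ (-α) / κ)
              ≤ Ctil * (c * (max (tstar : ℝ) (t : ℝ)) ^ (-α)) ^ (h - 1) := by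
  have hα0 : (0:ℝ) < α := by linarith
  refine ⟨1, one_pos, fun c hc _ => ?_⟩
  have hc0 : (0:ℝ) < c := lt_of_lt_of_le one_pos hc
  obtain ⟨k, rfl⟩ : ∃ k, h = k + 1 := ⟨h - 1, (Nat.succ_pred_eq_of_pos hh).symm⟩
  have hk1 : k + 1 - 1 = k := rfl
  set M : ℝ := max 1 ((k : ℝ) * α) with hM
  have hM1 : (1:ℝ) ≤ M := le_max_left _ _
  have hβM : (k : ℝ) * α ≤ M := le_max_right _ _
  set T : ℕ := tstar + 1 + ⌈(c / κ) ^ ((1:ℝ)/α)⌉₊ + ⌈(4 * M * κ / c) ^ ((1:ℝ)/(1-α))⌉₊ with hT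
  have hT1 : 1 ≤ T := by omega
  have hTts : tstar ≤ T := by omega
  have hTa : (c / κ) ^ ((1:ℝ)/α) ≤ (T : ℝ) := by
    calc (c / κ) ^ ((1:ℝ)/α) ≤ (⌈(c / κ) ^ ((1:ℝ)/α)⌉₊ : ℝ) := Nat.le_ceil _
      _ ≤ (T : ℝ) := by
          exact_mod_cast Nat.cast_le.mpr ((Nat.le_add_left _ _).trans (Nat.le_add_right _ _))
  have hTb : (4 * M * κ / c) ^ ((1:ℝ)/(1-α)) ≤ (T : ℝ) := by
    calc (4 * M * κ / c) ^ ((1:ℝ)/(1-α)) ≤ (⌈(4 * M * κ / c) ^ ((1:ℝ)/(1-α))⌉₊ : ℝ) :=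
          Nat.le_ceil _
      _ ≤ (T : ℝ) := by exact_mod_cast Nat.cast_le.mpr (Nat.le_add_left _ _)
  -- the constant
  set C : ℝ := 4 * κ +
      ∑ t ∈ Finset.range (T + 1), |FSS c α κ tstar (k+1) t| / (etaSS c α tstar t) ^ k with hCdef
  have hsumnn : (0:ℝ) ≤
      ∑ t ∈ Finset.range (T + 1), |FSS c α κ tstar (k+1) t| / (etaSS c α tstar t) ^ k := by
    apply Finset.sum_nonneg
    intro i _
    have hp := etaSS_pos (α := α) hc0 htstar i
    positivity
  have hC4 : 4 * κ ≤ C := by rw [hCdef]; linarith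
  have hCpos : 0 < C := by linarith
  -- base cases
  have base : ∀ t, t ≤ T → FSS c α κ tstar (k+1) t ≤ C * (etaSS c α tstar t) ^ k := by
    intro t ht
    have hp : 0 < (etaSS c α tstar t) ^ k := pow_pos (etaSS_pos hc0 htstar t) k
    have hmem : t ∈ Finset.range (T + 1) := Finset.mem_range.mpr (by omega)
    have hsingle : |FSS c α κ tstar (k+1) t| / (etaSS c α tstar t) ^ k ≤
        ∑ i ∈ Finset.range (T + 1), |FSS c α κ tstar (k+1) i| / (etaSS c α tstar i) ^ k := by
      apply Finset.single_le_sum (f := fun i => |FSS c α κ tstar (k+1) i| / (etaSS c α tstar i) ^ k)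
        _ hmem
      intro i _
      have hp2 := etaSS_pos (α := α) hc0 htstar i
      positivity
    have h9 : |FSS c α κ tstar (k+1) t| / (etaSS c α tstar t) ^ k ≤ C := by
      rw [hCdef]; linarith
    calc FSS c α κ tstar (k+1) t ≤ |FSS c α κ tstar (k+1) t| := le_abs_self _
      _ = (|FSS c α κ tstar (k+1) t| / (etaSS c α tstar t) ^ k) * (etaSS c α tstar t) ^ k :=
          (div_mul_cancel₀ _ hp.ne').symm
      _ ≤ C * (etaSS c α tstar t) ^ k := mul_le_mul_of_nonneg_right h9 hp.le
  -- inductive step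
  have step : ∀ t, T ≤ t → FSS c α κ tstar (k+1) t ≤ C * (etaSS c α tstar t) ^ k →
      FSS c α κ tstar (k+1) (t+1) ≤ C * (etaSS c α tstar (t+1)) ^ k := by
    intro t hTt IH
    have h1t : 1 ≤ t := le_trans hT1 hTt
    have hx1 : (1:ℝ) ≤ (t : ℝ) := by exact_mod_cast h1t
    have hxts : (tstar : ℝ) ≤ (t : ℝ) := by exact_mod_cast le_trans hTts hTt
    have hmax_t : max (tstar : ℝ) ((t : ℕ) : ℝ) = (t : ℝ) := max_eq_right hxts
    have hmax_t1 : max (tstar : ℝ) (((t+1) : ℕ) : ℝ) = (t : ℝ) + 1 := by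
      rw [max_eq_right (by push_cast; linarith)]
      push_cast; ring
    have hetat : etaSS c α tstar t = c * ((t:ℝ)) ^ (-α) := by
      unfold etaSS; rw [hmax_t]
    have hetat1 : etaSS c α tstar (t+1) = c * ((t:ℝ) + 1) ^ (-α) := by
      unfold etaSS; rw [hmax_t1]
    -- nonnegativity of the factor
    have hfac : 0 ≤ 1 - etaSS c α tstar (t+1) / κ := by
      rw [hetat1]
      have hca : c / κ ≤ ((t:ℝ) + 1) ^ α := by
        have h10 : ((c / κ) ^ ((1:ℝ)/α)) ^ α ≤ ((t:ℝ) + 1) ^ α := by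
          apply Real.rpow_le_rpow (Real.rpow_nonneg (by positivity) _) _ hα0.le
          calc (c / κ) ^ ((1:ℝ)/α) ≤ (T : ℝ) := hTa
            _ ≤ (t : ℝ) := by exact_mod_cast Nat.cast_le.mpr hTt
            _ ≤ (t : ℝ) + 1 := by linarith
        rwa [← Real.rpow_mul (by positivity), one_div_mul_cancel hα0.ne', Real.rpow_one] at h10
      have ht1p : (0:ℝ) < ((t:ℝ) + 1) ^ α := Real.rpow_pos_of_pos (by linarith) _
      have h11 : c * ((t:ℝ) + 1) ^ (-α) ≤ κ := by
        rw [Real.rpow_neg (by linarith : (0:ℝ) ≤ (t:ℝ) + 1)]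
        have hcb : c ≤ ((t:ℝ)+1) ^ α * κ := (div_le_iff₀ hκ).mp hca
        calc c * (((t:ℝ) + 1) ^ α)⁻¹ ≤ (((t:ℝ)+1) ^ α * κ) * (((t:ℝ)+1) ^ α)⁻¹ :=
              mul_le_mul_of_nonneg_right hcb (by positivity)
          _ = κ * ((((t:ℝ)+1) ^ α) * (((t:ℝ)+1) ^ α)⁻¹) := by ring
          _ = κ := by rw [mul_inv_cancel₀ ht1p.ne', mul_one]
      have h11' : c * ((t:ℝ) + 1) ^ (-α) / κ ≤ 1 := div_le_one_of_le₀ h11 hκ.le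
      linarith
    rw [FSS_succ c α κ tstar (k+1) t h1t]
    have hxB : (4 * M * κ / c) ^ ((1:ℝ)/(1-α)) ≤ (t : ℝ) :=
      le_trans hTb (by exact_mod_cast Nat.cast_le.mpr hTt)
    have hkey := step_key (c := c) (α := α) (κ := κ) (M := M) (C := C) (x := (t:ℝ)) k
      hx1 hα0 hα2 hκ hc0 hM1 hβM hC4 hxB
    calc (1 - etaSS c α tstar (t+1) / κ) * (FSS c α κ tstar (k+1) t + (etaSS c α tstar t) ^ (k+1))
        ≤ (1 - etaSS c α tstar (t+1) / κ) * (C * (etaSS c α tstar t) ^ k + (etaSS c α tstar t) ^ (k+1)) := by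
          apply mul_le_mul_of_nonneg_left _ hfac
          linarith [IH]
      _ = C * (etaSS c α tstar t) ^ k + (etaSS c α tstar t) ^ (k+1)
            - (etaSS c α tstar (t+1) / κ) * (C * (etaSS c α tstar t) ^ k)
            - (etaSS c α tstar (t+1) / κ) * (etaSS c α tstar t) ^ (k+1) := by ring
      _ ≤ C * (etaSS c α tstar t) ^ k + (etaSS c α tstar t) ^ (k+1)
            - (etaSS c α tstar (t+1) / κ) * (C * (etaSS c α tstar t) ^ k) := by
          have h12 : 0 ≤ (etaSS c α tstar (t+1) / κ) * (etaSS c α tstar t) ^ (k+1) := by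
            have e1 := etaSS_pos (α := α) hc0 htstar (t+1)
            have e2 := etaSS_pos (α := α) hc0 htstar t
            positivity
          linarith
      _ ≤ C * (etaSS c α tstar (t+1)) ^ k := by
          rw [hetat, hetat1]
          have := hkey
          linarith [hkey]
  -- full induction
  have main : ∀ t, FSS c α κ tstar (k+1) t ≤ C * (etaSS c α tstar t) ^ k := by
    intro t
    rcases le_or_gt t T with hle | hgt
    · exact base t hle
    · have h13 : ∀ n, T ≤ n → FSS c α κ tstar (k+1) n ≤ C * (etaSS c α tstar n) ^ k := by
        intro n hn
        induction n, hn using Nat.le_induction with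
        | base => exact base T le_rfl
        | succ n hn IH => exact step n hn IH
      exact h13 t hgt.le
  refine ⟨C, hCpos, fun t => ?_⟩
  have := main t
  rw [hk1]
  simpa [FSS, etaSS] using this
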